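/- Let η > 0, Ω > 0, let H_S^(r) be an N×N complex Hermitian matrix, let G_c : ℝ → ℂ be continuous, and let ψ_Ω : [0,∞) → ℂ^N be a continuously differentiable solution of ψ_Ω'(t) = −i (H_S^(r) + (ηΩ/π) I_N) ψ_Ω(t) − ∫₀ᵗ (G_Ω(t−s) + G_c(t−s)) ψ_Ω(s) ds with ψ_Ω(0) = ψ_0. Then for all t ≥ 0 the integral identity holds: ψ_Ω(t) − ψ_0 = −i H_S^(r) ∫₀ᵗ ψ_Ω(τ) dτ − ∫₀ᵗ ∫₀^τ G_c(τ−s) ψ_Ω(s) ds dτ − iη ((1/π) arctan(Ωt)) ψ_0 − iη ∫₀ᵗ ∫₀^τ f_Ω(τ−s) ψ_Ω'(s) ds dτ; in particular the divergent counterterm (ηΩ/π) cancels. -/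

import Mathlib

open MeasureTheory Matrix

/-- The regularized delta-sequence `f_Ω(t) = (1/π)·Ω/(1+(Ωt)²)`. -/
noncomputable def fOmega (Ω t : ℝ) : ℝ := (1 / Real.pi) * Ω / (1 + (Ω * t) ^ 2)

/-- The cutoff Ohmic correlation function `G_Ω(t) = iη f_Ω'(t) = −2iηΩ³t/(π(1+(Ωt)²)²)`. -/
noncomputable def GOmega (η Ω t : ℝ) : ℂ :=
  -2 * Complex.I * (η : ℂ) * (Ω : ℂ) ^ 3 * (t : ℂ) /
    ((Real.pi : ℂ) * (1 + ((Ω : ℂ) * (t : ℂ)) ^ 2) ^ 2)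

/-- The pointwise derivative of `fOmega Ω`. -/
noncomputable def dfOmega (Ω t : ℝ) : ℝ :=
  -(2 * Ω ^ 3 * t) / (Real.pi * (1 + (Ω * t) ^ 2) ^ 2)

lemma one_add_sq_pos (x : ℝ) : 0 < 1 + x ^ 2 := by positivity

lemma fOmega_hasDerivAt (Ω u : ℝ) : HasDerivAt (fOmega Ω) (dfOmega Ω u) u := by
  have hden : (0:ℝ) < 1 + (Ω * u) ^ 2 := one_add_sq_pos _
  have h1 : HasDerivAt (fun t : ℝ => 1 + (Ω * t) ^ 2) (2 * Ω ^ 2 * u) u := by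
    have h2 : HasDerivAt (fun t : ℝ => Ω * t) Ω u := by
      simpa using (hasDerivAt_id u).const_mul Ω
    have := (h2.pow 2).const_add 1
    refine this.congr_deriv ?_
    ring
  have := (hasDerivAt_const u ((1 / Real.pi) * Ω)).div h1 hden.ne'
  refine (this.congr_deriv ?_)
  unfold dfOmega
  field_simp
  ring

lemma fOmega_continuous (Ω : ℝ) : Continuous (fOmega Ω) :=
  continuous_iff_continuousAt.2 fun u => (fOmega_hasDerivAt Ω u).continuousAt

lemma dfOmega_continuous (Ω : ℝ) : Continuous (dfOmega Ω) := by
  unfold dfOmega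
  apply Continuous.div (by continuity) (by continuity)
  intro x
  have h1 : (0:ℝ) < 1 + (Ω * x) ^ 2 := one_add_sq_pos _
  positivity

lemma GOmega_eq (η Ω u : ℝ) : GOmega η Ω u = (Complex.I * (η:ℂ)) * ((dfOmega Ω u : ℝ) : ℂ) := by
  unfold GOmega dfOmega
  have hden : ((1:ℂ) + ((Ω:ℂ) * (u:ℂ)) ^ 2) ≠ 0 := by
    have h : ((1:ℂ) + ((Ω:ℂ) * (u:ℂ)) ^ 2) = (((1 + (Ω*u)^2 : ℝ)) : ℂ) := by push_cast; ring
    rw [h]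
    exact_mod_cast (one_add_sq_pos (Ω*u)).ne'
  have hπ : (Real.pi : ℂ) ≠ 0 := by exact_mod_cast Real.pi_ne_zero
  push_cast
  field_simp

lemma fOmega_zero (Ω : ℝ) : fOmega Ω 0 = Ω / Real.pi := by
  unfold fOmega; simp; ring

lemma fOmega_integral (Ω t : ℝ) :
    ∫ τ in (0:ℝ)..t, fOmega Ω τ = (1 / Real.pi) * Real.arctan (Ω * t) := by
  have h : ∀ τ : ℝ, HasDerivAt (fun x => (1 / Real.pi) * Real.arctan (Ω * x)) (fOmega Ω τ) τ := by
    intro τ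
    have h2 : HasDerivAt (fun x : ℝ => Ω * x) Ω τ := by
      simpa using (hasDerivAt_id τ).const_mul Ω
    have h3 := (Real.hasDerivAt_arctan (Ω * τ)).comp τ h2
    have := h3.const_mul (1 / Real.pi)
    refine (this.congr_deriv ?_)
    unfold fOmega
    field_simp
  rw [intervalIntegral.integral_eq_sub_of_hasDerivAt (fun τ _ => h τ)
    (((fOmega_continuous Ω)).intervalIntegrable _ _)]
  simp

/-- Let `ψ_Ω` be a continuously differentiable solution of
`ψ_Ω'(t) = −i(H_S^(r) + (ηΩ/π)I)ψ_Ω(t) − ∫₀ᵗ (G_Ω(t−s) + G_c(t−s)) ψ_Ω(s) ds` with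
`ψ_Ω(0) = ψ_0`. Then for all `t ≥ 0`,
`ψ_Ω(t) − ψ_0 = −i H_S^(r) ∫₀ᵗ ψ_Ω − ∫₀ᵗ∫₀^τ G_c(τ−s) ψ_Ω(s) ds dτ
  − iη((1/π) arctan(Ωt)) ψ_0 − iη ∫₀ᵗ∫₀^τ f_Ω(τ−s) ψ_Ω'(s) ds dτ`;
in particular the divergent counterterm `ηΩ/π` cancels. -/
theorem ohmic_integral_identity
    (N : ℕ) (η Ω : ℝ) (hη : 0 < η) (hΩ : 0 < Ω)
    (HS : Matrix (Fin N) (Fin N) ℂ) (hHS : HS.IsHermitian)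
    (Gc : ℝ → ℂ) (hGc : Continuous Gc)
    (ψ0 : Fin N → ℂ) (ψΩ ψΩ' : ℝ → Fin N → ℂ)
    (hψdiff : ∀ t ∈ Set.Ici (0:ℝ), HasDerivWithinAt ψΩ (ψΩ' t) (Set.Ici 0) t)
    (hψ'cont : ContinuousOn ψΩ' (Set.Ici 0))
    (hψ0 : ψΩ 0 = ψ0)
    (heq : ∀ t : ℝ, 0 ≤ t →
      ψΩ' t =
        (-Complex.I) • (HS + ((η * Ω / Real.pi : ℝ) : ℂ) • (1 : Matrix (Fin N) (Fin N) ℂ)).mulVec (ψΩ t) -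
          ∫ s in (0:ℝ)..t, (GOmega η Ω (t - s) + Gc (t - s)) • ψΩ s) :
    ∀ t : ℝ, 0 ≤ t →
      ψΩ t - ψ0 =
        (-Complex.I) • HS.mulVec (∫ τ in (0:ℝ)..t, ψΩ τ) -
          (∫ τ in (0:ℝ)..t, ∫ s in (0:ℝ)..τ, Gc (τ - s) • ψΩ s) -
          (Complex.I * (η : ℂ)) • (((1 / Real.pi) * Real.arctan (Ω * t) : ℝ) : ℂ) • ψ0 -
          (Complex.I * (η : ℂ)) •
            ∫ τ in (0:ℝ)..t, ∫ s in (0:ℝ)..τ, ((fOmega Ω (τ - s) : ℝ) : ℂ) • ψΩ' s := by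
  intro t ht
  have hψcont : ContinuousOn ψΩ (Set.Ici (0:ℝ)) := fun x hx => (hψdiff x hx).continuousWithinAt
  have hmax : Continuous (fun s : ℝ => max s 0) := continuous_id.max continuous_const
  set φ : ℝ → Fin N → ℂ := fun s => ψΩ (max s 0) with hφdef
  set dφ : ℝ → Fin N → ℂ := fun s => ψΩ' (max s 0) with hdφdef
  have hφcont : Continuous φ := hψcont.comp_continuous hmax fun x => Set.mem_Ici.mpr (le_max_right _ _)
  have hdφcont : Continuous dφ := hψ'cont.comp_continuous hmax fun x => Set.mem_Ici.mpr (le_max_right _ _)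
  have hφeq : ∀ s : ℝ, 0 ≤ s → φ s = ψΩ s := fun s hs => by
    simp only [hφdef, max_eq_left hs]
  have hdφeq : ∀ s : ℝ, 0 ≤ s → dφ s = ψΩ' s := fun s hs => by
    simp only [hdφdef, max_eq_left hs]
  -- continuity of kernels
  have hfker : ∀ τ : ℝ, Continuous fun s : ℝ => fOmega Ω (τ - s) := fun τ =>
    (fOmega_continuous Ω).comp (continuous_const.sub continuous_id)
  have hGΩcont : Continuous (GOmega η Ω) := by
    have h : GOmega η Ω = fun u => (Complex.I * (η:ℂ)) * ((dfOmega Ω u : ℝ) : ℂ) :=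
      funext fun u => GOmega_eq η Ω u
    rw [h]
    exact continuous_const.mul (Complex.continuous_ofReal.comp (dfOmega_continuous Ω))
  -- integration by parts
  have ibp : ∀ τ : ℝ, 0 ≤ τ →
      (∫ s in (0:ℝ)..τ, dfOmega Ω (τ - s) • ψΩ s)
        = (∫ s in (0:ℝ)..τ, fOmega Ω (τ - s) • ψΩ' s)
          - (fOmega Ω 0 • ψΩ τ - fOmega Ω τ • ψ0) := by
    intro τ hτ
    have huIcc : Set.uIcc (0:ℝ) τ = Set.Icc 0 τ := Set.uIcc_of_le hτ
    have hg : ∀ s : ℝ, HasDerivAt (fun x => fOmega Ω (τ - x)) (-dfOmega Ω (τ - s)) s := by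
      intro s
      have h1 : HasDerivAt (fun x : ℝ => τ - x) (-1) s := by
        simpa using (hasDerivAt_id s).const_sub τ
      have h2 := (fOmega_hasDerivAt Ω (τ - s)).comp s h1
      refine h2.congr_deriv ?_
      ring
    have hcont : ContinuousOn (fun s => fOmega Ω (τ - s) • ψΩ s) (Set.Icc 0 τ) :=
      ((hfker τ).continuousOn).smul (hψcont.mono Set.Icc_subset_Ici_self)
    have hderiv : ∀ s ∈ Set.Ioo (0:ℝ) τ,
        HasDerivWithinAt (fun s => fOmega Ω (τ - s) • ψΩ s)
          (fOmega Ω (τ - s) • ψΩ' s + (-dfOmega Ω (τ - s)) • ψΩ s) (Set.Ioi s) s := by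
      intro s hs
      have hψs : HasDerivAt ψΩ (ψΩ' s) s :=
        (hψdiff s hs.1.le).hasDerivAt (Ici_mem_nhds hs.1)
      exact ((hg s).smul hψs).hasDerivWithinAt
    have hint1 : IntervalIntegrable (fun s => fOmega Ω (τ - s) • ψΩ' s) volume 0 τ := by
      apply ContinuousOn.intervalIntegrable
      rw [huIcc]
      exact ((hfker τ).continuousOn).smul (hψ'cont.mono Set.Icc_subset_Ici_self)
    have hint2 : IntervalIntegrable (fun s => dfOmega Ω (τ - s) • ψΩ s) volume 0 τ := by
      apply ContinuousOn.intervalIntegrable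
      rw [huIcc]
      exact (((dfOmega_continuous Ω).comp (continuous_const.sub continuous_id)).continuousOn).smul
        (hψcont.mono Set.Icc_subset_Ici_self)
    have hint2' : IntervalIntegrable (fun s => (-dfOmega Ω (τ - s)) • ψΩ s) volume 0 τ := by
      have h := hint2.neg
      simp only [neg_smul]
      exact h
    have hftc := intervalIntegral.integral_eq_sub_of_hasDeriv_right_of_le hτ hcont hderiv
      (hint1.add hint2')
    rw [intervalIntegral.integral_add hint1 hint2'] at hftc
    simp only [neg_smul, intervalIntegral.integral_neg, sub_self, sub_zero, hψ0] at hftc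
    have h3 := sub_eq_iff_eq_add.mp hftc
    rw [eq_sub_iff_add_eq]
    rw [h3]
    abel
  -- key pointwise identity
  have key : ∀ τ ∈ Set.Icc (0:ℝ) t, ψΩ' τ =
      (-Complex.I) • HS.mulVec (φ τ)
      - (∫ s in (0:ℝ)..τ, Gc (τ - s) • φ s)
      - (Complex.I * (η:ℂ)) • (fOmega Ω τ • ψ0)
      - (Complex.I * (η:ℂ)) • (∫ s in (0:ℝ)..τ, fOmega Ω (τ - s) • dφ s) := by
    intro τ hτmem
    obtain ⟨hτ, -⟩ := hτmem
    have huIcc : Set.uIcc (0:ℝ) τ = Set.Icc 0 τ := Set.uIcc_of_le hτ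
    have e1 : (∫ s in (0:ℝ)..τ, Gc (τ - s) • φ s) = ∫ s in (0:ℝ)..τ, Gc (τ - s) • ψΩ s := by
      apply intervalIntegral.integral_congr
      intro s hs
      rw [huIcc] at hs
      simp only [hφeq s hs.1]
    have e2 : (∫ s in (0:ℝ)..τ, fOmega Ω (τ - s) • dφ s)
        = ∫ s in (0:ℝ)..τ, fOmega Ω (τ - s) • ψΩ' s := by
      apply intervalIntegral.integral_congr
      intro s hs
      rw [huIcc] at hs
      simp only [hdφeq s hs.1]
    rw [e1, e2, hφeq τ hτ, heq τ hτ]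
    rw [Matrix.add_mulVec, Matrix.smul_mulVec, Matrix.one_mulVec]
    have hi1 : IntervalIntegrable (fun s => GOmega η Ω (τ - s) • ψΩ s) volume 0 τ := by
      apply ContinuousOn.intervalIntegrable
      rw [huIcc]
      exact ((hGΩcont.comp (continuous_const.sub continuous_id)).continuousOn).smul
        (hψcont.mono Set.Icc_subset_Ici_self)
    have hi2 : IntervalIntegrable (fun s => Gc (τ - s) • ψΩ s) volume 0 τ := by
      apply ContinuousOn.intervalIntegrable
      rw [huIcc]
      exact ((hGc.comp (continuous_const.sub continuous_id)).continuousOn).smul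
        (hψcont.mono Set.Icc_subset_Ici_self)
    have hsplit : (∫ s in (0:ℝ)..τ, (GOmega η Ω (τ - s) + Gc (τ - s)) • ψΩ s)
        = (∫ s in (0:ℝ)..τ, GOmega η Ω (τ - s) • ψΩ s)
          + ∫ s in (0:ℝ)..τ, Gc (τ - s) • ψΩ s := by
      rw [← intervalIntegral.integral_add hi1 hi2]
      simp only [add_smul]
    have hGint : (∫ s in (0:ℝ)..τ, GOmega η Ω (τ - s) • ψΩ s)
        = (Complex.I * (η:ℂ)) • ((∫ s in (0:ℝ)..τ, fOmega Ω (τ - s) • ψΩ' s)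
            - (fOmega Ω 0 • ψΩ τ - fOmega Ω τ • ψ0)) := by
      have e : ∀ s : ℝ, GOmega η Ω (τ - s) • ψΩ s
          = (Complex.I * (η:ℂ)) • (dfOmega Ω (τ - s) • ψΩ s) := by
        intro s
        rw [GOmega_eq, mul_smul, Complex.coe_smul]
      simp only [e]
      rw [intervalIntegral.integral_smul, ibp τ hτ]
    rw [hsplit, hGint]
    simp only [← Complex.coe_smul]
    rw [fOmega_zero]
    push_cast
    module
  -- FTC for ψΩ
  have ftc : (∫ τ in (0:ℝ)..t, ψΩ' τ) = ψΩ t - ψ0 := by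
    rw [← hψ0]
    apply intervalIntegral.integral_eq_sub_of_hasDeriv_right_of_le ht
      (hψcont.mono Set.Icc_subset_Ici_self)
      (fun x hx => ((hψdiff x hx.1.le).hasDerivAt (Ici_mem_nhds hx.1)).hasDerivWithinAt)
    apply ContinuousOn.intervalIntegrable
    rw [Set.uIcc_of_le ht]
    exact hψ'cont.mono Set.Icc_subset_Ici_self
  -- assemble
  have huIcct : Set.uIcc (0:ℝ) t = Set.Icc 0 t := Set.uIcc_of_le ht
  rw [← ftc]
  have hcg : (∫ τ in (0:ℝ)..t, ψΩ' τ) = ∫ τ in (0:ℝ)..t,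
      ((-Complex.I) • HS.mulVec (φ τ)
      - (∫ s in (0:ℝ)..τ, Gc (τ - s) • φ s)
      - (Complex.I * (η:ℂ)) • (fOmega Ω τ • ψ0)
      - (Complex.I * (η:ℂ)) • (∫ s in (0:ℝ)..τ, fOmega Ω (τ - s) • dφ s)) := by
    apply intervalIntegral.integral_congr
    intro τ hτ
    rw [huIcct] at hτ
    exact key τ hτ
  rw [hcg]
  -- continuity / integrability of the four terms
  have hmv : Continuous fun v : Fin N → ℂ => HS.mulVec v := by
    have h := LinearMap.continuous_of_finiteDimensional (Matrix.mulVecLin HS)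
    have e : (fun v : Fin N → ℂ => HS.mulVec v) = ⇑HS.mulVecLin := by
      funext v; simp [Matrix.mulVecLin_apply]
    rw [e]; exact h
  have hT1c : Continuous fun τ : ℝ => (-Complex.I) • HS.mulVec (φ τ) :=
    ((hmv.comp hφcont).const_smul (-Complex.I)).congr fun _ => rfl
  have hT2c : Continuous fun τ : ℝ => ∫ s in (0:ℝ)..τ, Gc (τ - s) • φ s := by
    apply intervalIntegral.continuous_parametric_intervalIntegral_of_continuous _ continuous_id
    exact (hGc.comp (continuous_fst.sub continuous_snd)).smul (hφcont.comp continuous_snd)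
  have hT3c : Continuous fun τ : ℝ => (Complex.I * (η:ℂ)) • (fOmega Ω τ • ψ0) :=
    (((fOmega_continuous Ω).smul (continuous_const (y := ψ0))).const_smul (Complex.I * (η:ℂ))).congr
      fun _ => rfl
  have hT4c' : Continuous fun τ : ℝ => ∫ s in (0:ℝ)..τ, fOmega Ω (τ - s) • dφ s := by
    refine intervalIntegral.continuous_parametric_intervalIntegral_of_continuous (μ := volume) ?_ continuous_id
    exact (((fOmega_continuous Ω).comp (continuous_fst.sub continuous_snd)).smul
      (hdφcont.comp continuous_snd))
  have hT4c : Continuous fun τ : ℝ =>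
      (Complex.I * (η:ℂ)) • (∫ s in (0:ℝ)..τ, fOmega Ω (τ - s) • dφ s) :=
    (hT4c'.const_smul (Complex.I * (η:ℂ))).congr fun _ => rfl
  have h1i := hT1c.intervalIntegrable (μ := volume) (0:ℝ) t
  have h2i := hT2c.intervalIntegrable (μ := volume) (0:ℝ) t
  have h3i := hT3c.intervalIntegrable (μ := volume) (0:ℝ) t
  have h4i := hT4c.intervalIntegrable (μ := volume) (0:ℝ) t
  rw [intervalIntegral.integral_sub ((h1i.sub h2i).sub h3i) h4i,
    intervalIntegral.integral_sub (h1i.sub h2i) h3i,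
    intervalIntegral.integral_sub h1i h2i]
  -- term 1
  have hA : (∫ τ in (0:ℝ)..t, (-Complex.I) • HS.mulVec (φ τ))
      = (-Complex.I) • HS.mulVec (∫ τ in (0:ℝ)..t, ψΩ τ) := by
    rw [intervalIntegral.integral_smul]
    congr 1
    have hint : IntervalIntegrable φ volume 0 t := hφcont.intervalIntegrable 0 t
    have h := (LinearMap.toContinuousLinearMap (Matrix.mulVecLin HS)).intervalIntegral_comp_comm hint
    simp only [LinearMap.coe_toContinuousLinearMap', Matrix.mulVecLin_apply] at h
    rw [h]
    exact congrArg _ (intervalIntegral.integral_congr (μ := volume)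
      fun τ hτ => hφeq τ (huIcct ▸ hτ).1)
  -- term 2
  have hB : (∫ τ in (0:ℝ)..t, ∫ s in (0:ℝ)..τ, Gc (τ - s) • φ s)
      = ∫ τ in (0:ℝ)..t, ∫ s in (0:ℝ)..τ, Gc (τ - s) • ψΩ s := by
    apply intervalIntegral.integral_congr
    intro τ hτ
    have hτ0 : 0 ≤ τ := (huIcct ▸ hτ).1
    exact intervalIntegral.integral_congr fun s hs => by
      simp only [hφeq s ((Set.uIcc_of_le hτ0) ▸ hs).1]
  -- term 3
  have hC : (∫ τ in (0:ℝ)..t, (Complex.I * (η:ℂ)) • (fOmega Ω τ • ψ0))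
      = (Complex.I * (η : ℂ)) • (((1 / Real.pi) * Real.arctan (Ω * t) : ℝ) : ℂ) • ψ0 := by
    rw [intervalIntegral.integral_smul, intervalIntegral.integral_smul_const, fOmega_integral,
      Complex.coe_smul]
  -- term 4
  have hD : (∫ τ in (0:ℝ)..t, (Complex.I * (η:ℂ)) • (∫ s in (0:ℝ)..τ, fOmega Ω (τ - s) • dφ s))
      = (Complex.I * (η : ℂ)) •
          ∫ τ in (0:ℝ)..t, ∫ s in (0:ℝ)..τ, ((fOmega Ω (τ - s) : ℝ) : ℂ) • ψΩ' s := by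
    rw [intervalIntegral.integral_smul]
    congr 1
    apply intervalIntegral.integral_congr
    intro τ hτ
    have hτ0 : 0 ≤ τ := (huIcct ▸ hτ).1
    exact intervalIntegral.integral_congr fun s hs => by
      simp only [hdφeq s ((Set.uIcc_of_le hτ0) ▸ hs).1, Complex.coe_smul]
  rw [hA, hB, hC, hD]
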